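/- For mutually independent standard Gaussian random variables (γ_j)_{j∈ℤ∖{0}} and any K > 0 and 0 < t < 1/2, the probability that ∑_{j≠0} γ_j²/j² ≥ K is at most e^{-tK} · π√(2t)/sin(π√(2t)). -/

import Mathlib

open MeasureTheory ProbabilityTheory Real Filter
open scoped NNReal ENNReal

section Aux

lemma stmt0_gauss_int {u : ℝ} (hu : 0 ≤ u) (hu2 : u < 1/2) :
    ∫ x, Real.exp (u * x^2) ∂(gaussianReal 0 1) = (Real.sqrt (1 - 2*u))⁻¹ := by
  have hc : (0:ℝ) < 1/2 - u := by linarith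
  rw [gaussianReal_of_var_ne_zero _ one_ne_zero]
  have hpdf : (gaussianPDF 0 1)
      = fun x => ((Real.toNNReal (gaussianPDFReal 0 1 x) : ℝ≥0) : ℝ≥0∞) := by
    ext x; rw [gaussianPDF]; rfl
  rw [hpdf, integral_withDensity_eq_integral_smul
    ((measurable_gaussianPDFReal 0 1).real_toNNReal) _]
  have h1 : ∀ x : ℝ, (Real.toNNReal (gaussianPDFReal 0 1 x)) • Real.exp (u * x^2)
      = (Real.sqrt (2*π))⁻¹ * Real.exp (-(1/2 - u) * x^2) := by
    intro x
    rw [NNReal.smul_def, smul_eq_mul, Real.coe_toNNReal _ (gaussianPDFReal_nonneg 0 1 x),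
      gaussianPDFReal]
    push_cast
    rw [mul_assoc, ← Real.exp_add]
    ring_nf
  simp_rw [h1]
  rw [integral_const_mul, integral_gaussian]
  have h2 : π / (1/2 - u) = (2*π) * (1-2*u)⁻¹ := by field_simp
  rw [h2]
  rw [Real.sqrt_mul (by positivity : (0:ℝ) ≤ 2*π) ((1-2*u)⁻¹)]
  rw [Real.sqrt_mul (by positivity : (0:ℝ) ≤ 2) π]
  rw [Real.sqrt_inv, ← mul_assoc, inv_mul_cancel₀ (by positivity), one_mul]

lemma stmt0_gauss_integrable {u : ℝ} (hu : 0 ≤ u) (hu2 : u < 1/2) :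
    Integrable (fun x => Real.exp (u * x^2)) (gaussianReal 0 1) := by
  have hc : (0:ℝ) < 1/2 - u := by linarith
  rw [gaussianReal_of_var_ne_zero _ one_ne_zero]
  have hpdf : (gaussianPDF 0 1)
      = fun x => ((Real.toNNReal (gaussianPDFReal 0 1 x) : ℝ≥0) : ℝ≥0∞) := by
    ext x; rw [gaussianPDF]; rfl
  rw [hpdf, integrable_withDensity_iff_integrable_smul
    ((measurable_gaussianPDFReal 0 1).real_toNNReal)]
  have h1 : ∀ x : ℝ, (Real.toNNReal (gaussianPDFReal 0 1 x)) • Real.exp (u * x^2)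
      = (Real.sqrt (2*π))⁻¹ * Real.exp (-(1/2 - u) * x^2) := by
    intro x
    rw [NNReal.smul_def, smul_eq_mul, Real.coe_toNNReal _ (gaussianPDFReal_nonneg 0 1 x),
      gaussianPDFReal]
    push_cast
    rw [mul_assoc, ← Real.exp_add]
    ring_nf
  simp_rw [h1]
  exact (integrable_exp_neg_mul_sq hc).const_mul _

lemma stmt0_mgf_sq {Ω : Type*} [MeasureSpace Ω] {X : Ω → ℝ} (hX : Measurable X)
    (hmap : Measure.map X ℙ = gaussianReal 0 1) {u : ℝ} (hu : 0 ≤ u) (hu2 : u < 1/2) :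
    Integrable (fun ω => Real.exp (u * (X ω)^2)) ℙ ∧
      ∫ ω, Real.exp (u * (X ω)^2) ∂ℙ = (Real.sqrt (1 - 2*u))⁻¹ := by
  have hg : Continuous fun x : ℝ => Real.exp (u * x^2) := by continuity
  have hmeas : AEStronglyMeasurable (fun x : ℝ => Real.exp (u * x^2)) (Measure.map X ℙ) :=
    hg.aestronglyMeasurable
  constructor
  · exact (integrable_map_measure hmeas hX.aemeasurable).1
      (by rw [hmap]; exact stmt0_gauss_integrable hu hu2)
  · calc ∫ ω, Real.exp (u * (X ω)^2) ∂ℙ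
        = ∫ y, Real.exp (u * y^2) ∂(Measure.map X ℙ) := (integral_map hX.aemeasurable hmeas).symm
      _ = (Real.sqrt (1 - 2*u))⁻¹ := by rw [hmap]; exact stmt0_gauss_int hu hu2

/-- Index map: `(n, true) ↦ n+1`, `(n, false) ↦ -(n+1)`. -/
def stmt0_idx (p : ℕ × Bool) : {j : ℤ // j ≠ 0} :=
  ⟨cond p.2 ((p.1:ℤ)+1) (-((p.1:ℤ)+1)), by rcases p with ⟨n, b⟩; cases b <;> simp <;> omega⟩

lemma stmt0_idx_inj : Function.Injective stmt0_idx := by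
  rintro ⟨n, b⟩ ⟨m, c⟩ h
  have := congrArg Subtype.val h
  cases b <;> cases c <;> simp [stmt0_idx] at this <;> simp_all <;> omega

lemma stmt0_idx_sq (n : ℕ) (b : Bool) :
    (((stmt0_idx (n, b) : ℤ) : ℝ))^2 = ((n:ℝ)+1)^2 := by
  cases b <;> simp [stmt0_idx] <;> push_cast <;> ring

lemma stmt0_mem_idx_image {j : {j : ℤ // j ≠ 0}} {N : ℕ} (h : (j : ℤ).natAbs ≤ N) :
    j ∈ Finset.image stmt0_idx (Finset.range N ×ˢ Finset.univ) := by
  rcases j with ⟨j, hj⟩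
  have h' : j.natAbs ≤ N := h
  rcases lt_or_gt_of_ne hj with hneg | hpos
  · refine Finset.mem_image.2 ⟨(j.natAbs - 1, false), ?_, ?_⟩
    · simp only [Finset.mem_product, Finset.mem_range, Finset.mem_univ, and_true]
      omega
    · apply Subtype.ext; simp [stmt0_idx]; omega
  · refine Finset.mem_image.2 ⟨(j.natAbs - 1, true), ?_, ?_⟩
    · simp only [Finset.mem_product, Finset.mem_range, Finset.mem_univ, and_true]
      omega
    · apply Subtype.ext; simp [stmt0_idx]; omega

lemma stmt0_euler_fac_pos {s : ℝ} (hs0 : 0 < s) (hs1 : s < 1) (j : ℕ) :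
    0 < 1 - s^2/((j:ℝ)+1)^2 := by
  have hp : (0:ℝ) < ((j:ℝ)+1)^2 := by positivity
  rw [sub_pos, div_lt_one hp]
  nlinarith [Nat.cast_nonneg (α := ℝ) j]

lemma stmt0_euler_bound {s : ℝ} (hs0 : 0 < s) (hs1 : s < 1) (N : ℕ) :
    Real.sin (π * s) ≤ π * s * ∏ j ∈ Finset.range N, (1 - s^2/((j:ℝ)+1)^2) := by
  have hanti : Antitone (fun n => π * s * ∏ j ∈ Finset.range n, (1 - s^2/((j:ℝ)+1)^2)) := by
    apply antitone_nat_of_succ_le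
    intro n
    rw [Finset.prod_range_succ, ← mul_assoc]
    have hp : 0 < π * s * ∏ j ∈ Finset.range n, (1 - s^2/((j:ℝ)+1)^2) := by
      have := Real.pi_pos
      exact mul_pos (by positivity) (Finset.prod_pos fun j _ => stmt0_euler_fac_pos hs0 hs1 j)
    have h1 : 1 - s^2/((n:ℝ)+1)^2 ≤ 1 := by
      have : 0 ≤ s^2/((n:ℝ)+1)^2 := by positivity
      linarith
    exact mul_le_of_le_one_right hp.le h1
  exact le_of_tendsto (Real.tendsto_euler_sin_prod s)
    (eventually_atTop.2 ⟨N, fun m hm => hanti hm⟩)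

lemma stmt0_prod_inv_bound {t : ℝ} (ht : 0 < t) (ht2 : t < 1/2) (N : ℕ) :
    ∏ j ∈ Finset.range N, (1 - 2*t/((j:ℝ)+1)^2)⁻¹
      ≤ π * Real.sqrt (2*t) / Real.sin (π * Real.sqrt (2*t)) := by
  set s := Real.sqrt (2*t) with hs
  have hs2 : s^2 = 2*t := Real.sq_sqrt (by linarith)
  have hs0 : 0 < s := Real.sqrt_pos.2 (by linarith)
  have hs1 : s < 1 := by
    rw [hs, show (1:ℝ) = Real.sqrt 1 by simp]
    exact Real.sqrt_lt_sqrt (by linarith) (by linarith)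
  have hsin : 0 < Real.sin (π * s) := by
    apply Real.sin_pos_of_pos_of_lt_pi (by positivity)
    nlinarith [Real.pi_pos]
  have hterm : ∀ j : ℕ, 1 - 2*t/((j:ℝ)+1)^2 = 1 - s^2/((j:ℝ)+1)^2 := fun j => by rw [hs2]
  simp_rw [hterm]
  rw [Finset.prod_inv_distrib]
  have hq : 0 < ∏ j ∈ Finset.range N, (1 - s^2/((j:ℝ)+1)^2) :=
    Finset.prod_pos fun j _ => stmt0_euler_fac_pos hs0 hs1 j
  rw [inv_eq_one_div, div_le_div_iff₀ hq hsin, one_mul]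
  exact stmt0_euler_bound hs0 hs1 N

end Aux

set_option maxHeartbeats 1000000 in
/-- For mutually independent standard Gaussian random variables `(γ_j)_{j∈ℤ∖{0}}`,
any `K > 0` and `0 < t < 1/2`, the probability that `∑_{j≠0} γ_j²/j² ≥ K` is at most
`e^{-tK} · π√(2t)/sin(π√(2t))`. -/
theorem stmt0 {Ω : Type*} [MeasureSpace Ω] [IsProbabilityMeasure (ℙ : Measure Ω)]
    (γ : {j : ℤ // j ≠ 0} → Ω → ℝ)
    (hmeas : ∀ j, Measurable (γ j))
    (hindep : iIndepFun γ ℙ)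
    (hgauss : ∀ j, Measure.map (γ j) ℙ = gaussianReal 0 1)
    (K t : ℝ) (hK : 0 < K) (ht : 0 < t) (ht2 : t < 1/2) :
    (ℙ {ω | K ≤ ∑' j : {j : ℤ // j ≠ 0}, (γ j ω)^2 / ((j : ℤ) : ℝ)^2}).toReal
      ≤ Real.exp (-t * K) * (Real.pi * Real.sqrt (2*t)) / Real.sin (Real.pi * Real.sqrt (2*t)) := by
  classical
  set C : ℝ := π * Real.sqrt (2*t) / Real.sin (π * Real.sqrt (2*t)) with hC
  have hCpos : 0 < C := by
    have hs2 : (Real.sqrt (2*t))^2 = 2*t := Real.sq_sqrt (by linarith)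
    have hs0 : 0 < Real.sqrt (2*t) := Real.sqrt_pos.2 (by linarith)
    have hs1 : Real.sqrt (2*t) < 1 := by
      rw [show (1:ℝ) = Real.sqrt 1 by simp]
      exact Real.sqrt_lt_sqrt (by linarith) (by linarith)
    have hsin : 0 < Real.sin (π * Real.sqrt (2*t)) := by
      apply Real.sin_pos_of_pos_of_lt_pi (by positivity)
      nlinarith [Real.pi_pos]
    have := Real.pi_pos
    positivity
  -- the family of summands
  set X : {j : ℤ // j ≠ 0} → Ω → ℝ := fun j ω => (γ j ω)^2 / ((j : ℤ) : ℝ)^2 with hX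
  have hXmeas : ∀ j, Measurable (X j) := fun j => ((hmeas j).pow_const 2).div_const _
  have hXnonneg : ∀ j ω, 0 ≤ X j ω := fun j ω => by
    have : ((j : ℤ) : ℝ)^2 ≥ 0 := sq_nonneg _
    positivity
  have hXindep : iIndepFun X ℙ :=
    hindep.comp (fun j x => x^2 / ((j : ℤ) : ℝ)^2)
      (fun j => (measurable_id.pow_const 2).div_const _)
  -- squared index is at least one
  have hcsq : ∀ j : {j : ℤ // j ≠ 0}, (1:ℝ) ≤ ((j : ℤ) : ℝ)^2 := by
    intro j
    have h1 : (1:ℤ) ≤ (j : ℤ)^2 := by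
      have hj := j.2
      rcases lt_or_gt_of_ne hj with h' | h' <;> nlinarith
    have h2 : ((1:ℤ):ℝ) ≤ (((j : ℤ)^2 : ℤ) : ℝ) := Int.cast_le.2 h1
    push_cast at h2
    linarith
  -- mgf and integrability of each summand
  have hu : ∀ j : {j : ℤ // j ≠ 0}, 0 ≤ t / ((j : ℤ) : ℝ)^2 ∧ t / ((j : ℤ) : ℝ)^2 < 1/2 := by
    intro j
    have h1 := hcsq j
    constructor
    · positivity
    · have : t / ((j : ℤ) : ℝ)^2 ≤ t := div_le_self ht.le h1
      linarith
  have hrw : ∀ (j : {j : ℤ // j ≠ 0}) (ω : Ω),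
      Real.exp (t * X j ω) = Real.exp ((t / ((j : ℤ) : ℝ)^2) * (γ j ω)^2) := by
    intro j ω
    congr 1
    rw [hX]
    ring
  have hint : ∀ j, Integrable (fun ω => Real.exp (t * X j ω)) ℙ := by
    intro j
    simp_rw [hrw j]
    exact (stmt0_mgf_sq (hmeas j) (hgauss j) (hu j).1 (hu j).2).1
  have hmgf : ∀ j : {j : ℤ // j ≠ 0},
      mgf (X j) ℙ t = (Real.sqrt (1 - 2*t/((j : ℤ) : ℝ)^2))⁻¹ := by
    intro j
    rw [mgf]
    simp_rw [hrw j]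
    rw [(stmt0_mgf_sq (hmeas j) (hgauss j) (hu j).1 (hu j).2).2]
    congr 2
    ring
  -- the exhausting finsets
  set F : ℕ → Finset {j : ℤ // j ≠ 0} :=
    fun N => Finset.image stmt0_idx (Finset.range N ×ˢ Finset.univ) with hF
  have hFmono : Monotone F := by
    intro N M hNM
    exact Finset.image_subset_image (Finset.product_subset_product
      (Finset.range_subset_range.2 hNM) le_rfl)
  -- the mgf of partial sums is bounded by C
  have hmgf_sum : ∀ N : ℕ, mgf (∑ j ∈ F N, X j) ℙ t ≤ C := by
    intro N
    rw [hXindep.mgf_sum hXmeas]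
    rw [hF]
    rw [Finset.prod_image (fun p _ q _ h => stmt0_idx_inj h)]
    rw [Finset.prod_product]
    have hinner : ∀ n : ℕ, ∀ b : Bool,
        mgf (X (stmt0_idx (n, b))) ℙ t = (Real.sqrt (1 - 2*t/((n:ℝ)+1)^2))⁻¹ := by
      intro n b
      rw [hmgf, stmt0_idx_sq]
    have hfac : ∀ n : ℕ, 0 < 1 - 2*t/((n:ℝ)+1)^2 := by
      intro n
      have hp : (0:ℝ) < ((n:ℝ)+1)^2 := by positivity
      rw [sub_pos, div_lt_one hp]
      nlinarith [Nat.cast_nonneg (α := ℝ) n]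
    have hprod : ∀ n ∈ Finset.range N,
        (∏ b : Bool, mgf (X (stmt0_idx (n, b))) ℙ t) = (1 - 2*t/((n:ℝ)+1)^2)⁻¹ := by
      intro n _
      rw [Fintype.prod_bool, hinner, hinner, ← mul_inv,
        Real.mul_self_sqrt (hfac n).le]
    rw [Finset.prod_congr rfl hprod]
    exact stmt0_prod_inv_bound ht ht2 N
  -- Chernoff bound for each partial sum
  have hchern : ∀ (N : ℕ) (K' : ℝ),
      (ℙ {ω | K' ≤ ∑ j ∈ F N, X j ω}).toReal ≤ Real.exp (-t * K') * C := by
    intro N K'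
    have hintsum : Integrable (fun ω => Real.exp (t * (∑ j ∈ F N, X j) ω)) ℙ :=
      hXindep.integrable_exp_mul_sum hXmeas (fun j _ => hint j)
    have h1 := measure_ge_le_exp_mul_mgf (X := ∑ j ∈ F N, X j) (μ := ℙ) K' ht.le hintsum
    have h2 : {ω | K' ≤ (∑ j ∈ F N, X j) ω} = {ω | K' ≤ ∑ j ∈ F N, X j ω} := by
      ext ω; simp [Finset.sum_apply]
    rw [h2] at h1
    refine h1.trans ?_
    have := Real.exp_pos (-t * K')
    exact mul_le_mul_of_nonneg_left (hmgf_sum N) this.le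
  -- bound with a shift δ > 0
  have hshift : ∀ δ : ℝ, 0 < δ →
      (ℙ {ω | K ≤ ∑' j : {j : ℤ // j ≠ 0}, (γ j ω)^2 / ((j : ℤ) : ℝ)^2}).toReal
        ≤ Real.exp (-t * (K - δ)) * C := by
    intro δ hδ
    set B : ℝ := Real.exp (-t * (K - δ)) * C with hB
    have hBpos : 0 < B := mul_pos (Real.exp_pos _) hCpos
    set A : ℕ → Set Ω := fun N => {ω | K - δ ≤ ∑ j ∈ F N, X j ω} with hA
    have hAmono : Monotone A := by
      intro N M hNM ω hω
      refine le_trans hω (Finset.sum_le_sum_of_subset_of_nonneg (hFmono hNM)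
        (fun j _ _ => hXnonneg j ω))
    have hsub : {ω | K ≤ ∑' j : {j : ℤ // j ≠ 0}, (γ j ω)^2 / ((j : ℤ) : ℝ)^2} ⊆ ⋃ N, A N := by
      intro ω hω
      simp only [Set.mem_setOf_eq] at hω
      by_cases hsum : Summable (fun j : {j : ℤ // j ≠ 0} => X j ω)
      · have hts : K ≤ ∑' j, X j ω := hω
        have hev := hsum.hasSum.eventually (Ioi_mem_nhds
          (show (∑' j, X j ω) - δ < ∑' j, X j ω by linarith))
        rw [SummationFilter.unconditional_filter, eventually_atTop] at hev
        obtain ⟨F₀, hF₀⟩ := hev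
        refine Set.mem_iUnion.2 ⟨F₀.sup (fun j => (j : ℤ).natAbs), ?_⟩
        have hsubF : F₀ ⊆ F (F₀.sup (fun j => (j : ℤ).natAbs)) := fun j hj =>
          stmt0_mem_idx_image (Finset.le_sup (f := fun j : {j : ℤ // j ≠ 0} => (j : ℤ).natAbs) hj)
        have h2 := hF₀ _ hsubF
        simp only [hA, Set.mem_setOf_eq]
        linarith
      · rw [tsum_eq_zero_of_not_summable hsum] at hω
        linarith
    have hAbound : ∀ N, ℙ (A N) ≤ ENNReal.ofReal B := by
      intro N
      rw [ENNReal.le_ofReal_iff_toReal_le (measure_ne_top _ _) hBpos.le]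
      exact hchern N (K - δ)
    have hmeasle : ℙ {ω | K ≤ ∑' j : {j : ℤ // j ≠ 0}, (γ j ω)^2 / ((j : ℤ) : ℝ)^2}
        ≤ ENNReal.ofReal B := by
      refine le_trans (measure_mono hsub) ?_
      rw [Directed.measure_iUnion (hAmono.directed_le)]
      exact iSup_le hAbound
    calc (ℙ {ω | K ≤ ∑' j : {j : ℤ // j ≠ 0}, (γ j ω)^2 / ((j : ℤ) : ℝ)^2}).toReal
        ≤ (ENNReal.ofReal B).toReal := ENNReal.toReal_mono ENNReal.ofReal_ne_top hmeasle
      _ = B := ENNReal.toReal_ofReal hBpos.le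
  -- take δ → 0⁺
  have hlim : Tendsto (fun δ : ℝ => Real.exp (-t * (K - δ)) * C) (nhdsWithin 0 (Set.Ioi 0))
      (nhds (Real.exp (-t * K) * C)) := by
    have hcont : Continuous (fun δ : ℝ => Real.exp (-t * (K - δ)) * C) :=
      (Real.continuous_exp.comp (continuous_const.mul (continuous_const.sub continuous_id))).mul
        continuous_const
    have := hcont.tendsto 0
    simp only [sub_zero] at this
    exact this.mono_left nhdsWithin_le_nhds
  have hfinal : (ℙ {ω | K ≤ ∑' j : {j : ℤ // j ≠ 0}, (γ j ω)^2 / ((j : ℤ) : ℝ)^2}).toReal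
      ≤ Real.exp (-t * K) * C := by
    refine ge_of_tendsto hlim ?_
    filter_upwards [self_mem_nhdsWithin] with δ hδ
    exact hshift δ hδ
  calc (ℙ {ω | K ≤ ∑' j : {j : ℤ // j ≠ 0}, (γ j ω)^2 / ((j : ℤ) : ℝ)^2}).toReal
      ≤ Real.exp (-t * K) * C := hfinal
    _ = Real.exp (-t * K) * (Real.pi * Real.sqrt (2*t)) / Real.sin (Real.pi * Real.sqrt (2*t)) := by
        rw [hC]; ring
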